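/- Let q ≥ 1 be a real number and λ a real number with |λ| ≤ q + 1. Then every complex root u of the quadratic qu² - λu + 1 lies in the set C, i.e. either |u| = q^(-1/2), or u is real with 1/q ≤ |u| ≤ 1. -/

import Mathlib

/-- For `q ≥ 1` and `|λ| ≤ q + 1`, every complex root of `qu² - λu + 1` lies
in the set `C`: either `|u| = q^(-1/2)`, or `u` is real with `1/q ≤ |u| ≤ 1`. -/
theorem roots_lie_on_C (q : ℝ) (hq : 1 ≤ q) (lam : ℝ) (hlam : |lam| ≤ q + 1)
    (u : ℂ) (hroot : (q : ℂ) * u ^ 2 - (lam : ℂ) * u + 1 = 0) :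
    ‖u‖ = (Real.sqrt q)⁻¹ ∨
      (u.im = 0 ∧ 1 / q ≤ |u.re| ∧ |u.re| ≤ 1) := by
  have hq0 : 0 < q := lt_of_lt_of_le one_pos hq
  set x := u.re with hx
  set y := u.im with hy
  have hre : q * (x * x - y * y) - lam * x + 1 = 0 := by
    have := congrArg Complex.re hroot
    simpa [pow_two, Complex.mul_re, Complex.mul_im] using this
  have him : y * (2 * q * x - lam) = 0 := by
    have := congrArg Complex.im hroot
    simp [pow_two, Complex.mul_re, Complex.mul_im] at this
    nlinarith [this]
  rcases mul_eq_zero.mp him with hy0 | hlin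
  · -- real case
    right
    have hre' : q * x * x - lam * x + 1 = 0 := by
      rw [hy0] at hre; linear_combination hre
    have hpos : 0 < lam * x := by nlinarith [sq_nonneg x, hq0]
    have hlx : lam * x = q * x * x + 1 := by linarith
    have habs : |lam| * |x| = q * |x| * |x| + 1 := by
      have h1 : |lam| * |x| = lam * x := by rw [← abs_mul, abs_of_pos hpos]
      have h2 : |x| * |x| = x * x := abs_mul_abs_self x
      linear_combination h1 + hlx - q * h2
    have hkey : q * |x| * |x| + 1 ≤ (q + 1) * |x| := by
      rw [← habs]; exact mul_le_mul_of_nonneg_right hlam (abs_nonneg x)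
    have hq1 : (q * |x| - 1) * (|x| - 1) ≤ 0 := by nlinarith [hkey]
    refine ⟨hy0, ?_, ?_⟩
    · rw [div_le_iff₀ hq0]
      nlinarith [hq1, hq, abs_nonneg x, hq0]
    · by_contra h
      push_neg at h
      have h1 : 0 < q * |x| - 1 := by nlinarith
      nlinarith [mul_pos h1 (by linarith : (0:ℝ) < |x| - 1)]
  · -- nonreal case: 2qx = lam, so q(x²+y²) = 1
    left
    have hlam2 : lam = 2 * q * x := by linarith
    have hnorm : q * (x * x + y * y) = 1 := by
      linear_combination -hre - x * hlam2
    have hsq : (‖u‖) ^ 2 = q⁻¹ := by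
      rw [Complex.sq_norm, Complex.normSq_apply, ← hx, ← hy]
      field_simp
      linarith [hnorm]
    have : ‖u‖ = Real.sqrt q⁻¹ := by
      rw [← Real.sqrt_sq (norm_nonneg u), hsq]
    rw [this, Real.sqrt_inv]
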